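/- Define G^{ab}{}_{AC} := -γ^a{}_{(A}{}^B γ^b{}_{C)B}. Then G^{ab}{}_{AC} is antisymmetric in a,b, symmetric in A,C, and satisfies G_{abCD} G^{ab}{}_{AB} = ε_{AD} ε_{BC} + ε_{AC} ε_{BD}. -/

import Mathlib

lemma sum3_rotate {M : Type*} [AddCommMonoid M] {ι κ μ : Type*} [Fintype ι] [Fintype κ] [Fintype μ]
    (f : ι → κ → μ → M) :
    ∑ a, ∑ b, ∑ c, f a b c = ∑ b, ∑ c, ∑ a, f a b c := by
  rw [Finset.sum_comm]
  exact Finset.sum_congr rfl fun b _ => Finset.sum_comm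

lemma sum4_swap {M : Type*} [AddCommMonoid M] {ι₁ ι₂ ι₃ ι₄ : Type*}
    [Fintype ι₁] [Fintype ι₂] [Fintype ι₃] [Fintype ι₄]
    (f : ι₁ → ι₂ → ι₃ → ι₄ → M) :
    ∑ a, ∑ b, ∑ c, ∑ d, f a b c d = ∑ c, ∑ d, ∑ a, ∑ b, f a b c d := by
  calc ∑ a, ∑ b, ∑ c, ∑ d, f a b c d
      = ∑ a, ∑ c, ∑ d, ∑ b, f a b c d := Finset.sum_congr rfl fun a _ => sum3_rotate _
    _ = ∑ c, ∑ d, ∑ a, ∑ b, f a b c d := sum3_rotate _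

theorem stmt_5
    (g ginv : Fin 5 → Fin 5 → ℂ)
    (ε εh : Fin 4 → Fin 4 → ℂ)
    (γ γlo γmixU γloU : Fin 5 → Fin 4 → Fin 4 → ℂ)
    (G Glo : Fin 5 → Fin 5 → Fin 4 → Fin 4 → ℂ)
    (hεa : ∀ A B : Fin 4, ε A B = -ε B A)
    (hεinv : ∀ A C : Fin 4,
      ∑ B : Fin 4, ε A B * εh C B = if A = C then (1 : ℂ) else 0)
    (hgsymm : ∀ a b : Fin 5, g a b = g b a)
    (hginv : ∀ a b : Fin 5,
      ∑ c : Fin 5, ginv a c * g c b = if a = b then (1 : ℂ) else 0)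
    (hcl : ∀ (a b : Fin 5) (A C : Fin 4),
      (∑ B : Fin 4, γ a A B * γ b B C) + (∑ B : Fin 4, γ b A B * γ a B C)
        = -(if A = C then (1 : ℂ) else 0) * g a b)
    (hfund : ∀ (D A C B : Fin 4),
      ∑ a : Fin 5, ∑ b : Fin 5, ginv a b * γ a D A * γ b C B
        = (1/2) * (if D = A then (1 : ℂ) else 0) * (if C = B then (1 : ℂ) else 0)
          - (if C = A then (1 : ℂ) else 0) * (if D = B then (1 : ℂ) else 0)
          + ε C D * εh A B)
    (htr : ∀ a : Fin 5, ∑ A : Fin 4, γ a A A = 0)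
    (hγlo : ∀ (a : Fin 5) (A B : Fin 4),
      γlo a A B = ∑ C : Fin 4, γ a A C * ε C B)
    (hγmixU : ∀ (a : Fin 5) (A B : Fin 4),
      γmixU a A B = ∑ b : Fin 5, ginv a b * γ b A B)
    (hγloU : ∀ (a : Fin 5) (A B : Fin 4),
      γloU a A B = ∑ b : Fin 5, ginv a b * γlo b A B)
    (hG : ∀ (a b : Fin 5) (A C : Fin 4),
      G a b A C = -(1/2 : ℂ) *
        ((∑ B : Fin 4, γmixU a A B * γloU b C B)
          + (∑ B : Fin 4, γmixU a C B * γloU b A B)))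
    (hGlo : ∀ (a b : Fin 5) (A C : Fin 4),
      Glo a b A C = ∑ c : Fin 5, ∑ d : Fin 5, g a c * g b d * G c d A C) :
    (∀ (a b : Fin 5) (A C : Fin 4), G a b A C = -G b a A C) ∧
    (∀ (a b : Fin 5) (A C : Fin 4), G a b A C = G a b C A) ∧
    (∀ (A B C D : Fin 4),
      ∑ a : Fin 5, ∑ b : Fin 5, Glo a b C D * G a b A B
        = ε A D * ε B C + ε A C * ε B D) := by
  -- ## metric inverse facts
  obtain ⟨hginvsymm, hgN⟩ :
      (∀ a b : Fin 5, ginv a b = ginv b a) ∧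
      (∀ c e : Fin 5, ∑ a : Fin 5, g a c * ginv a e = if c = e then (1 : ℂ) else 0) := by
    set M : Matrix (Fin 5) (Fin 5) ℂ := Matrix.of g with hM
    set N : Matrix (Fin 5) (Fin 5) ℂ := Matrix.of ginv with hN
    have hNM : N * M = 1 := by
      ext a b
      simp [Matrix.mul_apply, hM, hN, hginv, Matrix.one_apply]
    have hMN : M * N = 1 := mul_eq_one_comm.mp hNM
    have hMsymm : M.transpose = M := by
      ext a b; simp [hM, Matrix.transpose_apply, hgsymm a b]
    have hNtM : N.transpose * M = 1 := by
      have := congrArg Matrix.transpose hMN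
      rwa [Matrix.transpose_mul, hMsymm, Matrix.transpose_one] at this
    have hNsymm : N.transpose = N := by
      calc N.transpose = N.transpose * (M * N) := by rw [hMN, Matrix.mul_one]
        _ = (N.transpose * M) * N := by rw [Matrix.mul_assoc]
        _ = N := by rw [hNtM, Matrix.one_mul]
    constructor
    · intro a b
      have := congrFun (congrFun hNsymm a) b
      simpa [Matrix.transpose_apply, hN] using this.symm
    · intro c e
      have := congrFun (congrFun hMN c) e
      simp only [Matrix.mul_apply, Matrix.one_apply, hM, hN] at this
      rw [← this]
      exact Finset.sum_congr rfl fun a _ => by rw [hgsymm a c]; simp [Matrix.of_apply]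
  -- ## epsilon inverse facts
  obtain ⟨hEhE, hEE'⟩ :
      (∀ H E : Fin 4, ∑ K : Fin 4, εh H K * ε K E = if H = E then (-1 : ℂ) else 0) ∧
      (∀ B F : Fin 4, ∑ E : Fin 4, ε B E * εh E F = if B = F then (-1 : ℂ) else 0) := by
    set E4 : Matrix (Fin 4) (Fin 4) ℂ := Matrix.of ε with hE4
    set Eh : Matrix (Fin 4) (Fin 4) ℂ := Matrix.of εh with hEh
    have h1 : E4 * Eh.transpose = 1 := by
      ext A C
      simp only [Matrix.mul_apply, Matrix.transpose_apply, Matrix.one_apply, hE4, hEh,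
        Matrix.of_apply]
      exact hεinv A C
    have h2 : Eh * E4.transpose = 1 := by
      have := congrArg Matrix.transpose h1
      rwa [Matrix.transpose_mul, Matrix.transpose_transpose, Matrix.transpose_one] at this
    have h3 : E4.transpose = -E4 := by
      ext A B
      simp only [Matrix.transpose_apply, Matrix.neg_apply, hE4, Matrix.of_apply]
      rw [hεa B A]
    rw [h3] at h2
    have h4 : Eh * E4 = -1 := by
      have := congrArg Neg.neg h2
      simpa [Matrix.mul_neg] using this
    have h5 : E4 * Eh = -1 := by
      have h6 : (-Eh) * E4 = 1 := by rw [Matrix.neg_mul, h4, neg_neg]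
      have h7 : E4 * (-Eh) = 1 := mul_eq_one_comm.mp h6
      calc E4 * Eh = -(E4 * (-Eh)) := by rw [Matrix.mul_neg, neg_neg]
        _ = -1 := by rw [h7]
    constructor
    · intro H E
      have := congrFun (congrFun h4 H) E
      simp only [Matrix.mul_apply, Matrix.neg_apply, Matrix.one_apply, hE4, hEh,
        Matrix.of_apply] at this
      rw [this]
      split <;> simp
    · intro B F
      have := congrFun (congrFun h5 B) F
      simp only [Matrix.mul_apply, Matrix.neg_apply, Matrix.one_apply, hE4, hEh,
        Matrix.of_apply] at this
      rw [this]
      split <;> simp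
  -- ## key antisymmetry lemma
  have K : ∀ (e f : Fin 5) (A C : Fin 4),
      (∑ B : Fin 4, γ e A B * γlo f C B) = -(∑ B : Fin 4, γ f C B * γlo e A B) := by
    intro e f A C
    simp only [hγlo, Finset.mul_sum]
    calc (∑ B : Fin 4, ∑ H : Fin 4, γ e A B * (γ f C H * ε H B))
        = ∑ B : Fin 4, ∑ H : Fin 4, -(γ f C H * (γ e A B * ε B H)) := by
          refine Finset.sum_congr rfl fun B _ => Finset.sum_congr rfl fun H _ => ?_
          rw [hεa H B]; ring
      _ = -∑ B : Fin 4, ∑ H : Fin 4, γ f C H * (γ e A B * ε B H) := by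
          simp [Finset.sum_neg_distrib]
      _ = -(∑ B : Fin 4, ∑ H : Fin 4, γ f C B * (γ e A H * ε H B)) :=
          congrArg Neg.neg Finset.sum_comm
  have hS : ∀ (a b : Fin 5) (A C : Fin 4),
      (∑ B : Fin 4, γmixU a A B * γloU b C B)
        = ∑ e : Fin 5, ∑ f : Fin 5, ginv a e * ginv b f * (∑ B : Fin 4, γ e A B * γlo f C B) := by
    intro a b A C
    simp only [hγmixU, hγloU, Finset.sum_mul_sum]
    rw [sum3_rotate (f := fun B e f => (ginv a e * γ e A B) * (ginv b f * γlo f C B))]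
    refine Finset.sum_congr rfl fun e _ => Finset.sum_congr rfl fun f _ => ?_
    rw [Finset.mul_sum]
    exact Finset.sum_congr rfl fun B _ => by ring
  have hSswap : ∀ (a b : Fin 5) (A C : Fin 4),
      (∑ B : Fin 4, γmixU a A B * γloU b C B)
        = -(∑ B : Fin 4, γmixU b C B * γloU a A B) := by
    intro a b A C
    rw [hS a b A C, hS b a C A]
    calc (∑ e : Fin 5, ∑ f : Fin 5, ginv a e * ginv b f * (∑ B : Fin 4, γ e A B * γlo f C B))
        = ∑ e : Fin 5, ∑ f : Fin 5, -(ginv b f * ginv a e * (∑ B : Fin 4, γ f C B * γlo e A B)) := by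
          refine Finset.sum_congr rfl fun e _ => Finset.sum_congr rfl fun f _ => ?_
          rw [K e f A C]; ring
      _ = -∑ e : Fin 5, ∑ f : Fin 5, ginv b f * ginv a e * (∑ B : Fin 4, γ f C B * γlo e A B) := by
          simp [Finset.sum_neg_distrib]
      _ = -(∑ e : Fin 5, ∑ f : Fin 5, ginv b e * ginv a f * (∑ B : Fin 4, γ e C B * γlo f A B)) :=
          congrArg Neg.neg Finset.sum_comm
  refine ⟨?_, ?_, ?_⟩
  · intro a b A C
    rw [hG a b A C, hG b a A C, hSswap a b A C, hSswap a b C A]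
    ring
  · intro a b A C
    rw [hG a b A C, hG a b C A]
    ring
  -- ## part 3
  · -- contractions of g against the mixed gammas
    have hcontr1 : ∀ (c : Fin 5) (A E : Fin 4), ∑ a : Fin 5, g a c * γmixU a A E = γ c A E := by
      intro c A E
      simp only [hγmixU, Finset.mul_sum]
      rw [Finset.sum_comm]
      calc ∑ e : Fin 5, ∑ a : Fin 5, g a c * (ginv a e * γ e A E)
          = ∑ e : Fin 5, (∑ a : Fin 5, g a c * ginv a e) * γ e A E := by
            refine Finset.sum_congr rfl fun e _ => ?_
            rw [Finset.sum_mul]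
            exact Finset.sum_congr rfl fun a _ => by ring
        _ = ∑ e : Fin 5, (if c = e then (1:ℂ) else 0) * γ e A E := by
            exact Finset.sum_congr rfl fun e _ => by rw [hgN c e]
        _ = γ c A E := by simp
    have hcontr2 : ∀ (c : Fin 5) (A E : Fin 4), ∑ a : Fin 5, g a c * γloU a A E = γlo c A E := by
      intro c A E
      simp only [hγloU, Finset.mul_sum]
      rw [Finset.sum_comm]
      calc ∑ e : Fin 5, ∑ a : Fin 5, g a c * (ginv a e * γlo e A E)
          = ∑ e : Fin 5, (∑ a : Fin 5, g a c * ginv a e) * γlo e A E := by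
            refine Finset.sum_congr rfl fun e _ => ?_
            rw [Finset.sum_mul]
            exact Finset.sum_congr rfl fun a _ => by ring
        _ = ∑ e : Fin 5, (if c = e then (1:ℂ) else 0) * γlo e A E := by
            exact Finset.sum_congr rfl fun e _ => by rw [hgN c e]
        _ = γlo c A E := by simp
    have hU : ∀ (c d : Fin 5) (A B : Fin 4),
        (∑ a : Fin 5, ∑ b : Fin 5, g a c * g b d * (∑ E : Fin 4, γmixU a A E * γloU b B E))
          = ∑ E : Fin 4, γ c A E * γlo d B E := by
      intro c d A B
      calc (∑ a : Fin 5, ∑ b : Fin 5, g a c * g b d * (∑ E : Fin 4, γmixU a A E * γloU b B E))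
          = ∑ a : Fin 5, ∑ b : Fin 5, ∑ E : Fin 4,
              (g a c * γmixU a A E) * (g b d * γloU b B E) := by
            refine Finset.sum_congr rfl fun a _ => Finset.sum_congr rfl fun b _ => ?_
            rw [Finset.mul_sum]
            exact Finset.sum_congr rfl fun E _ => by ring
        _ = ∑ E : Fin 4, ∑ a : Fin 5, ∑ b : Fin 5,
              (g a c * γmixU a A E) * (g b d * γloU b B E) :=
            (sum3_rotate fun E a b => (g a c * γmixU a A E) * (g b d * γloU b B E)).symm
        _ = ∑ E : Fin 4, (∑ a : Fin 5, g a c * γmixU a A E) * (∑ b : Fin 5, g b d * γloU b B E) := by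
            refine Finset.sum_congr rfl fun E _ => ?_
            rw [Finset.sum_mul_sum]
        _ = ∑ E : Fin 4, γ c A E * γlo d B E := by
            exact Finset.sum_congr rfl fun E _ => by rw [hcontr1, hcontr2]
    have hW : ∀ (c d : Fin 5) (A B : Fin 4),
        (∑ a : Fin 5, ∑ b : Fin 5, g a c * g b d * G a b A B)
          = -(1/2 : ℂ) * ((∑ E : Fin 4, γ c A E * γlo d B E)
              + (∑ E : Fin 4, γ c B E * γlo d A E)) := by
      intro c d A B
      rw [← hU c d A B, ← hU c d B A]
      calc (∑ a : Fin 5, ∑ b : Fin 5, g a c * g b d * G a b A B)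
          = ∑ a : Fin 5, ∑ b : Fin 5,
              ((-(1/2 : ℂ)) * (g a c * g b d * (∑ E : Fin 4, γmixU a A E * γloU b B E))
              + (-(1/2 : ℂ)) * (g a c * g b d * (∑ E : Fin 4, γmixU a B E * γloU b A E))) := by
            refine Finset.sum_congr rfl fun a _ => Finset.sum_congr rfl fun b _ => ?_
            rw [hG]; ring
        _ = (∑ a : Fin 5, ∑ b : Fin 5,
              (-(1/2 : ℂ)) * (g a c * g b d * (∑ E : Fin 4, γmixU a A E * γloU b B E)))
            + (∑ a : Fin 5, ∑ b : Fin 5,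
              (-(1/2 : ℂ)) * (g a c * g b d * (∑ E : Fin 4, γmixU a B E * γloU b A E))) := by
            simp [Finset.sum_add_distrib]
        _ = -(1/2 : ℂ) * ((∑ a : Fin 5, ∑ b : Fin 5, g a c * g b d * (∑ E : Fin 4, γmixU a A E * γloU b B E))
              + (∑ a : Fin 5, ∑ b : Fin 5, g a c * g b d * (∑ E : Fin 4, γmixU a B E * γloU b A E))) := by
            simp [Finset.mul_sum, mul_add]
    -- the two fundamental contractions
    have hL1 : ∀ (C F A E : Fin 4),
        (∑ c : Fin 5, γmixU c C F * γ c A E)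
          = (1/2) * (if A = E then (1:ℂ) else 0) * (if C = F then (1:ℂ) else 0)
            - (if C = E then (1:ℂ) else 0) * (if A = F then (1:ℂ) else 0)
            + ε C A * εh E F := by
      intro C F A E
      calc (∑ c : Fin 5, γmixU c C F * γ c A E)
          = ∑ c : Fin 5, ∑ e : Fin 5, ginv c e * γ c A E * γ e C F := by
            refine Finset.sum_congr rfl fun c _ => ?_
            rw [hγmixU, Finset.sum_mul]
            exact Finset.sum_congr rfl fun e _ => by ring
        _ = _ := hfund A E C F
    have hL2 : ∀ (D F B E : Fin 4),
        (∑ d : Fin 5, γloU d D F * γlo d B E)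
          = (1/2) * (ε D F * ε B E) - ε B F * ε D E - ε B D * ε E F := by
      intro D F B E
      calc (∑ d : Fin 5, γloU d D F * γlo d B E)
          = ∑ d : Fin 5, ∑ f : Fin 5, ∑ H : Fin 4, ∑ K : Fin 4,
              (ε H F * ε K E) * (ginv f d * γ f D H * γ d B K) := by
            refine Finset.sum_congr rfl fun d _ => ?_
            rw [hγloU, Finset.sum_mul]
            refine Finset.sum_congr rfl fun f _ => ?_
            rw [hγlo f D F, hγlo d B E, hginvsymm d f, mul_assoc, Finset.sum_mul_sum,
              Finset.mul_sum]
            refine Finset.sum_congr rfl fun H _ => ?_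
            rw [Finset.mul_sum]
            exact Finset.sum_congr rfl fun K _ => by ring
        _ = ∑ H : Fin 4, ∑ K : Fin 4, ∑ d : Fin 5, ∑ f : Fin 5,
              (ε H F * ε K E) * (ginv f d * γ f D H * γ d B K) := sum4_swap _
        _ = ∑ H : Fin 4, ∑ K : Fin 4,
              (ε H F * ε K E) * (∑ f : Fin 5, ∑ d : Fin 5, ginv f d * γ f D H * γ d B K) := by
            refine Finset.sum_congr rfl fun H _ => Finset.sum_congr rfl fun K _ => ?_
            rw [Finset.sum_comm]
            simp only [Finset.mul_sum]
        _ = ∑ H : Fin 4, ∑ K : Fin 4,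
              (ε H F * ε K E) *
                ((1/2) * (if D = H then (1:ℂ) else 0) * (if B = K then (1:ℂ) else 0)
                  - (if B = H then (1:ℂ) else 0) * (if D = K then (1:ℂ) else 0)
                  + ε B D * εh H K) := by
            refine Finset.sum_congr rfl fun H _ => Finset.sum_congr rfl fun K _ => ?_
            rw [hfund D H B K]
        _ = (1/2) * (ε D F * ε B E) - ε B F * ε D E - ε B D * ε E F := by
            have hsplit : (∑ H : Fin 4, ∑ K : Fin 4,
                (ε H F * ε K E) *
                  ((1/2) * (if D = H then (1:ℂ) else 0) * (if B = K then (1:ℂ) else 0)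
                    - (if B = H then (1:ℂ) else 0) * (if D = K then (1:ℂ) else 0)
                    + ε B D * εh H K))
              = (∑ H : Fin 4, ∑ K : Fin 4, (if D = H then (1:ℂ) else 0) *
                    ((if B = K then (1:ℂ) else 0) * ((1/2) * (ε H F * ε K E))))
                + (∑ H : Fin 4, ∑ K : Fin 4, (if B = H then (1:ℂ) else 0) *
                    ((if D = K then (1:ℂ) else 0) * (-(ε H F * ε K E))))
                + ε B D * (∑ H : Fin 4, ε H F * (∑ K : Fin 4, εh H K * ε K E)) := by
              simp only [Finset.mul_sum, ← Finset.sum_add_distrib]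
              refine Finset.sum_congr rfl fun H _ => Finset.sum_congr rfl fun K _ => by ring
            rw [hsplit]
            have e1 : (∑ H : Fin 4, ∑ K : Fin 4, (if D = H then (1:ℂ) else 0) *
                    ((if B = K then (1:ℂ) else 0) * ((1/2) * (ε H F * ε K E))))
                = (1/2) * (ε D F * ε B E) := by
              simp [Finset.sum_ite_eq]
            have e2 : (∑ H : Fin 4, ∑ K : Fin 4, (if B = H then (1:ℂ) else 0) *
                    ((if D = K then (1:ℂ) else 0) * (-(ε H F * ε K E))))
                = -(ε B F * ε D E) := by
              simp [Finset.sum_ite_eq]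
            have e3 : (∑ H : Fin 4, ε H F * (∑ K : Fin 4, εh H K * ε K E))
                = -(ε E F) := by
              calc (∑ H : Fin 4, ε H F * (∑ K : Fin 4, εh H K * ε K E))
                  = ∑ H : Fin 4, ε H F * (if H = E then (-1:ℂ) else 0) := by
                    exact Finset.sum_congr rfl fun H _ => by rw [hEhE H E]
                _ = -(ε E F) := by simp [Finset.sum_ite_eq']
            rw [e1, e2, e3]
            ring
    have hT : ∀ (C D A B : Fin 4),
        (∑ c : Fin 5, ∑ d : Fin 5,
            (∑ F : Fin 4, γmixU c C F * γloU d D F) * (∑ E : Fin 4, γ c A E * γlo d B E))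
          = (5/4 : ℂ) * (ε D C * ε B A) - ε B C * ε D A - ε C A * ε B D := by
      intro C D A B
      have e31 : (∑ F : Fin 4, ∑ E : Fin 4, εh E F * (ε D F * ε B E)) = -(ε D B) := by
        calc (∑ F : Fin 4, ∑ E : Fin 4, εh E F * (ε D F * ε B E))
            = ∑ F : Fin 4, ε D F * (∑ E : Fin 4, ε B E * εh E F) := by
              refine Finset.sum_congr rfl fun F _ => ?_
              rw [Finset.mul_sum]
              exact Finset.sum_congr rfl fun E _ => by ring
          _ = ∑ F : Fin 4, ε D F * (if B = F then (-1:ℂ) else 0) := by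
              exact Finset.sum_congr rfl fun F _ => by rw [hEE' B F]
          _ = -(ε D B) := by simp [Finset.sum_ite_eq]
      have e32 : (∑ F : Fin 4, ∑ E : Fin 4, εh E F * (ε B F * ε D E)) = -(ε B D) := by
        calc (∑ F : Fin 4, ∑ E : Fin 4, εh E F * (ε B F * ε D E))
            = ∑ F : Fin 4, ε B F * (∑ E : Fin 4, ε D E * εh E F) := by
              refine Finset.sum_congr rfl fun F _ => ?_
              rw [Finset.mul_sum]
              exact Finset.sum_congr rfl fun E _ => by ring
          _ = ∑ F : Fin 4, ε B F * (if D = F then (-1:ℂ) else 0) := by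
              exact Finset.sum_congr rfl fun F _ => by rw [hEE' D F]
          _ = -(ε B D) := by simp [Finset.sum_ite_eq]
      have e33 : (∑ F : Fin 4, ∑ E : Fin 4, εh E F * ε E F) = 4 := by
        rw [Finset.sum_comm]
        have h1 : ∀ E : Fin 4, (∑ F : Fin 4, εh E F * ε E F) = 1 := by
          intro E
          have h := hεinv E E
          simp at h
          rw [← h]
          exact Finset.sum_congr rfl fun F _ => mul_comm _ _
        calc (∑ E : Fin 4, ∑ F : Fin 4, εh E F * ε E F)
            = ∑ _E : Fin 4, (1:ℂ) := Finset.sum_congr rfl fun E _ => h1 E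
          _ = 4 := by simp
      calc (∑ c : Fin 5, ∑ d : Fin 5,
            (∑ F : Fin 4, γmixU c C F * γloU d D F) * (∑ E : Fin 4, γ c A E * γlo d B E))
          = ∑ c : Fin 5, ∑ d : Fin 5, ∑ F : Fin 4, ∑ E : Fin 4,
              (γmixU c C F * γ c A E) * (γloU d D F * γlo d B E) := by
            refine Finset.sum_congr rfl fun c _ => Finset.sum_congr rfl fun d _ => ?_
            rw [Finset.sum_mul_sum]
            exact Finset.sum_congr rfl fun F _ => Finset.sum_congr rfl fun E _ => by ring
        _ = ∑ F : Fin 4, ∑ E : Fin 4, ∑ c : Fin 5, ∑ d : Fin 5,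
              (γmixU c C F * γ c A E) * (γloU d D F * γlo d B E) := sum4_swap _
        _ = ∑ F : Fin 4, ∑ E : Fin 4,
              (∑ c : Fin 5, γmixU c C F * γ c A E) * (∑ d : Fin 5, γloU d D F * γlo d B E) := by
            refine Finset.sum_congr rfl fun F _ => Finset.sum_congr rfl fun E _ => ?_
            rw [Finset.sum_mul_sum]
        _ = ∑ F : Fin 4, ∑ E : Fin 4,
              ((1/2) * (if A = E then (1:ℂ) else 0) * (if C = F then (1:ℂ) else 0)
                - (if C = E then (1:ℂ) else 0) * (if A = F then (1:ℂ) else 0)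
                + ε C A * εh E F)
              * ((1/2) * (ε D F * ε B E) - ε B F * ε D E - ε B D * ε E F) := by
            refine Finset.sum_congr rfl fun F _ => Finset.sum_congr rfl fun E _ => ?_
            rw [hL1 C F A E, hL2 D F B E]
        _ = (∑ F : Fin 4, ∑ E : Fin 4, (if A = E then (1:ℂ) else 0) *
                ((if C = F then (1:ℂ) else 0) *
                  ((1/2) * ((1/2) * (ε D F * ε B E) - ε B F * ε D E - ε B D * ε E F))))
            + (∑ F : Fin 4, ∑ E : Fin 4, (if C = E then (1:ℂ) else 0) *
                ((if A = F then (1:ℂ) else 0) *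
                  (-((1/2) * (ε D F * ε B E) - ε B F * ε D E - ε B D * ε E F))))
            + (((1/2 : ℂ) * ε C A) * (∑ F : Fin 4, ∑ E : Fin 4, εh E F * (ε D F * ε B E))
              + (-(ε C A)) * (∑ F : Fin 4, ∑ E : Fin 4, εh E F * (ε B F * ε D E))
              + (-(ε C A * ε B D)) * (∑ F : Fin 4, ∑ E : Fin 4, εh E F * ε E F)) := by
            simp only [Finset.mul_sum, ← Finset.sum_add_distrib]
            refine Finset.sum_congr rfl fun F _ => Finset.sum_congr rfl fun E _ => by ring
        _ = (5/4 : ℂ) * (ε D C * ε B A) - ε B C * ε D A - ε C A * ε B D := by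
            rw [e31, e32, e33]
            have eX1 : (∑ F : Fin 4, ∑ E : Fin 4, (if A = E then (1:ℂ) else 0) *
                ((if C = F then (1:ℂ) else 0) *
                  ((1/2) * ((1/2) * (ε D F * ε B E) - ε B F * ε D E - ε B D * ε E F))))
              = (1/2) * ((1/2) * (ε D C * ε B A) - ε B C * ε D A - ε B D * ε A C) := by
              simp [Finset.sum_ite_eq]
            have eX2 : (∑ F : Fin 4, ∑ E : Fin 4, (if C = E then (1:ℂ) else 0) *
                ((if A = F then (1:ℂ) else 0) *
                  (-((1/2) * (ε D F * ε B E) - ε B F * ε D E - ε B D * ε E F))))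
              = -((1/2) * (ε D A * ε B C) - ε B A * ε D C - ε B D * ε C A) := by
              simp [Finset.sum_ite_eq]
            rw [eX1, eX2]
            simp only [hεa B A, hεa C A, hεa D A, hεa C B, hεa D B, hεa D C]
            ring
    intro A B C D
    calc ∑ a : Fin 5, ∑ b : Fin 5, Glo a b C D * G a b A B
        = ∑ a : Fin 5, ∑ b : Fin 5, ∑ c : Fin 5, ∑ d : Fin 5,
            (g a c * g b d * G a b A B) * G c d C D := by
          refine Finset.sum_congr rfl fun a _ => Finset.sum_congr rfl fun b _ => ?_
          rw [hGlo, Finset.sum_mul]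
          refine Finset.sum_congr rfl fun c _ => ?_
          rw [Finset.sum_mul]
          exact Finset.sum_congr rfl fun d _ => by ring
      _ = ∑ c : Fin 5, ∑ d : Fin 5, ∑ a : Fin 5, ∑ b : Fin 5,
            (g a c * g b d * G a b A B) * G c d C D := sum4_swap _
      _ = ∑ c : Fin 5, ∑ d : Fin 5,
            G c d C D * (∑ a : Fin 5, ∑ b : Fin 5, g a c * g b d * G a b A B) := by
          refine Finset.sum_congr rfl fun c _ => Finset.sum_congr rfl fun d _ => ?_
          rw [Finset.mul_sum]
          refine Finset.sum_congr rfl fun a _ => ?_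
          rw [Finset.mul_sum]
          exact Finset.sum_congr rfl fun b _ => by ring
      _ = ∑ c : Fin 5, ∑ d : Fin 5,
            ((1/4:ℂ) * ((∑ F : Fin 4, γmixU c C F * γloU d D F) * (∑ E : Fin 4, γ c A E * γlo d B E))
            + (1/4:ℂ) * ((∑ F : Fin 4, γmixU c C F * γloU d D F) * (∑ E : Fin 4, γ c B E * γlo d A E))
            + (1/4:ℂ) * ((∑ F : Fin 4, γmixU c D F * γloU d C F) * (∑ E : Fin 4, γ c A E * γlo d B E))
            + (1/4:ℂ) * ((∑ F : Fin 4, γmixU c D F * γloU d C F) * (∑ E : Fin 4, γ c B E * γlo d A E))) := by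
          refine Finset.sum_congr rfl fun c _ => Finset.sum_congr rfl fun d _ => ?_
          rw [hW c d A B, hG c d C D]
          ring
      _ = (1/4:ℂ) * (∑ c : Fin 5, ∑ d : Fin 5,
              (∑ F : Fin 4, γmixU c C F * γloU d D F) * (∑ E : Fin 4, γ c A E * γlo d B E))
          + (1/4:ℂ) * (∑ c : Fin 5, ∑ d : Fin 5,
              (∑ F : Fin 4, γmixU c C F * γloU d D F) * (∑ E : Fin 4, γ c B E * γlo d A E))
          + (1/4:ℂ) * (∑ c : Fin 5, ∑ d : Fin 5,
              (∑ F : Fin 4, γmixU c D F * γloU d C F) * (∑ E : Fin 4, γ c A E * γlo d B E))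
          + (1/4:ℂ) * (∑ c : Fin 5, ∑ d : Fin 5,
              (∑ F : Fin 4, γmixU c D F * γloU d C F) * (∑ E : Fin 4, γ c B E * γlo d A E)) := by
          simp only [Finset.mul_sum, ← Finset.sum_add_distrib]
      _ = ε A D * ε B C + ε A C * ε B D := by
          rw [hT C D A B, hT C D B A, hT D C A B, hT D C B A]
          simp only [hεa B A, hεa C A, hεa D A, hεa C B, hεa D B, hεa D C]
          ring
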